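/- Let M be a refinement monoid with algebraic preordering ≤, let a, b, c ∈ M, and let n be a positive integer. If a + c ≤ b + c, then there exists d ∈ M such that n·d ≤ c and a ≤ b + d. -/
import Mathlib

/-- The refinement property for a commutative monoid. -/
def HasRefinement (M : Type*) [AddCommMonoid M] : Prop :=
  ∀ a₀ a₁ b₀ b₁ : M, a₀ + a₁ = b₀ + b₁ →
    ∃ c₀₀ c₀₁ c₁₀ c₁₁ : M,
      a₀ = c₀₀ + c₀₁ ∧ a₁ = c₁₀ + c₁₁ ∧ b₀ = c₀₀ + c₁₀ ∧ b₁ = c₀₁ + c₁₁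

/-- The algebraic preordering on a commutative monoid: `x ≤ y` iff `∃ z, x + z = y`. -/
def algLE {M : Type*} [AddCommMonoid M] (x y : M) : Prop := ∃ z, x + z = y

private lemma arith_aux {M : Type*} [AddCommMonoid M] (k : ℕ) (x d' f w' : M) :
    k • (x + d') + (f + (d' + w')) = (k + 1) • d' + (f + k • x + w') := by
  rw [smul_add, succ_nsmul]
  abel

theorem stmt2 {M : Type*} [AddCommMonoid M] (hM : HasRefinement M)
    (a b c : M) (n : ℕ) (hn : 0 < n) (h : algLE (a + c) (b + c)) :
    ∃ d : M, algLE (n • d) c ∧ algLE a (b + d) := by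
  obtain ⟨z₀, hz₀⟩ := h
  have key : ∀ m : ℕ, ∃ d z w s f : M,
      a + z₀ = s + d ∧ b = s + z ∧ d + w = z + w ∧ c = (m + 1) • d + (f + w) := by
    intro m
    induction m with
    | zero =>
      obtain ⟨x, d, z, w, h1, h2, h3, h4⟩ := hM (a + z₀) c b c (by rw [← hz₀]; abel)
      exact ⟨d, z, w, x, 0, h1, h3, by rw [← h2, ← h4],
        by simpa using h4⟩
    | succ m ih =>
      obtain ⟨d, z, w, s, f, ha, hb, hdw, hc⟩ := ih
      obtain ⟨x, d', z', w', h1, h2, h3, h4⟩ := hM d w z w hdw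
      refine ⟨d', z', w', s + x, f + (m + 1) • x, ?_, ?_, ?_, ?_⟩
      · rw [ha, h1, add_assoc]
      · rw [hb, h3, add_assoc]
      · rw [← h2, ← h4]
      · rw [hc, h1, h4, arith_aux]
  obtain ⟨m, rfl⟩ : ∃ m, n = m + 1 := ⟨n - 1, (Nat.succ_pred_eq_of_pos hn).symm⟩
  obtain ⟨d, z, w, s, f, ha, hb, hdw, hc⟩ := key m
  refine ⟨d, ⟨f + w, hc.symm⟩, ⟨z₀ + z, ?_⟩⟩
  rw [← add_assoc, ha, hb]
  abel
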